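/- Under the multi-junction logarithmic EH model, the maximum achievable rate R̄(A²) = (1/2)·ln(1 + θ(A²)²/(2πeσ²)), with θ(A²) = c·ln(1 + (j^a + hrA²)/I) − c·ln(1 + j^a/I) and c = V_T√R_L/R_Σ > 0, is strictly increasing in A² and satisfies R̄(A²) = O(ln ln A²) as A² → ∞; i.e., R̄(A²)/ln ln(A²) → 1·(coefficient 1) in the sense that R̄(A²) − ln ln(A²) remains bounded as A² → ∞. -/

import Mathlib

open Real Filter Topology

/-- Under the multi-junction logarithmic EH model, the maximum achievable rate
`R̄(A²) = ½ ln(1 + θ(A²)²/(2πeσ²))`, with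
`θ(A²) = c ln(1 + (jₐ + h r A²)/I) − c ln(1 + jₐ/I)`, is strictly increasing
in `A²` on `[0,∞)` and `R̄(A²) − ln ln A²` remains bounded as `A² → ∞`. -/
theorem stmt13 (c I h r ja σ : ℝ) (hc : 0 < c) (hI : 0 < I) (hσ : 0 < σ)
    (hja : 0 ≤ ja) (hhr : 0 < h * r)
    (R : ℝ → ℝ)
    (hR : R = fun A2 => (1 / 2) * Real.log (1 +
      (c * Real.log (1 + (ja + h * r * A2) / I) - c * Real.log (1 + ja / I)) ^ 2 /
        (2 * π * exp 1 * σ ^ 2))) :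
    StrictMonoOn R (Set.Ici 0) ∧
    ∃ M : ℝ, ∀ᶠ A2 in atTop, |R A2 - Real.log (Real.log A2)| ≤ M := by
  set K : ℝ := 2 * π * exp 1 * σ ^ 2 with hK
  have hKpos : 0 < K := by positivity
  set θ : ℝ → ℝ := fun A2 => c * Real.log (1 + (ja + h * r * A2) / I) -
      c * Real.log (1 + ja / I) with hθdef
  have hbase : (0:ℝ) < 1 + ja / I := by positivity
  have hargpos : ∀ a : ℝ, 0 ≤ a → (0:ℝ) < 1 + (ja + h * r * a) / I := by
    intro a ha
    have h0 : 0 ≤ ja + h * r * a := by nlinarith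
    positivity
  have hθnn : ∀ a : ℝ, 0 ≤ a → 0 ≤ θ a := by
    intro a ha
    have h1 : (1:ℝ) + ja / I ≤ 1 + (ja + h * r * a) / I := by
      have h2 : ja ≤ ja + h * r * a := by nlinarith
      gcongr
    have := Real.log_le_log hbase h1
    simp only [hθdef]
    nlinarith
  have hθmono : ∀ a : ℝ, 0 ≤ a → ∀ b : ℝ, a < b → θ a < θ b := by
    intro a ha b hab
    have h1 : (1:ℝ) + (ja + h * r * a) / I < 1 + (ja + h * r * b) / I := by
      have h2 : ja + h * r * a < ja + h * r * b := by nlinarith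
      gcongr
    have := Real.log_lt_log (hargpos a ha) h1
    simp only [hθdef]
    nlinarith
  constructor
  · intro a ha b hb hab
    have h1 : θ a < θ b := hθmono a ha b hab
    have h2 : θ a ^ 2 < θ b ^ 2 := by
      have := hθnn a ha
      nlinarith
    have h3 : 1 + θ a ^ 2 / K < 1 + θ b ^ 2 / K := by gcongr
    have h4 : (0:ℝ) < 1 + θ a ^ 2 / K := by positivity
    have h5 := Real.log_lt_log h4 h3
    simp only [hR]
    linarith
  · -- Step 1: (1 + (ja + hr A2)/I)/A2 → hr/I
    have hinvA : Tendsto (fun A2 : ℝ => 1 / A2) atTop (𝓝 0) := by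
      simpa [one_div] using tendsto_inv_atTop_zero
    have hlim1 : Tendsto (fun A2 : ℝ => (1 + (ja + h * r * A2) / I) / A2) atTop
        (𝓝 (h * r / I)) := by
      have h0 : Tendsto (fun A2 : ℝ => (1 + ja / I) * (1 / A2) + h * r / I) atTop
          (𝓝 ((1 + ja / I) * 0 + h * r / I)) := (hinvA.const_mul _).add_const _
      rw [mul_zero, zero_add] at h0
      refine h0.congr' ?_
      filter_upwards [eventually_gt_atTop (0:ℝ)] with A2 hA2
      field_simp
      ring
    -- Step 2: θ A2 - c * log A2 → D
    have hDlim : Tendsto (fun A2 : ℝ => θ A2 - c * Real.log A2) atTop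
        (𝓝 (c * Real.log (h * r / I) - c * Real.log (1 + ja / I))) := by
      have hl : Tendsto (fun A2 : ℝ =>
          c * Real.log ((1 + (ja + h * r * A2) / I) / A2) - c * Real.log (1 + ja / I)) atTop
          (𝓝 (c * Real.log (h * r / I) - c * Real.log (1 + ja / I))) := by
        have := (hlim1.log (by positivity)).const_mul c
        exact this.sub_const _
      refine hl.congr' ?_
      filter_upwards [eventually_gt_atTop (0:ℝ)] with A2 hA2
      rw [Real.log_div (ne_of_gt (hargpos A2 hA2.le)) (ne_of_gt hA2)]
      simp only [hθdef]
      ring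
    -- Step 3: θ A2 / log A2 → c
    have hratio : Tendsto (fun A2 : ℝ => θ A2 / Real.log A2) atTop (𝓝 c) := by
      have hz : Tendsto (fun A2 : ℝ => (θ A2 - c * Real.log A2) * (1 / Real.log A2) + c)
          atTop (𝓝 ((c * Real.log (h * r / I) - c * Real.log (1 + ja / I)) * 0 + c)) := by
        have hinvlog : Tendsto (fun A2 : ℝ => 1 / Real.log A2) atTop (𝓝 0) :=
          hinvA.comp Real.tendsto_log_atTop
        exact (hDlim.mul hinvlog).add_const c
      rw [mul_zero, zero_add] at hz
      refine hz.congr' ?_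
      filter_upwards [Real.tendsto_log_atTop.eventually_gt_atTop 0] with A2 hA2
      field_simp
      ring
    -- Step 4: (1 + θ²/K)/(log A2)² → c²/K
    have hsum : Tendsto (fun A2 : ℝ => (1 + θ A2 ^ 2 / K) / (Real.log A2) ^ 2) atTop
        (𝓝 (c ^ 2 / K)) := by
      have hinv2 : Tendsto (fun A2 : ℝ => (1 / Real.log A2) ^ 2) atTop (𝓝 0) := by
        have := (hinvA.comp Real.tendsto_log_atTop).pow 2
        simpa using this
      have h0 : Tendsto (fun A2 : ℝ => (1 / Real.log A2) ^ 2 + (θ A2 / Real.log A2) ^ 2 / K)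
          atTop (𝓝 (0 + c ^ 2 / K)) := hinv2.add ((hratio.pow 2).div_const K)
      rw [zero_add] at h0
      refine h0.congr' ?_
      filter_upwards [Real.tendsto_log_atTop.eventually_gt_atTop 0] with A2 hA2
      rw [add_div, div_pow, div_pow, one_pow, div_div, div_div,
        mul_comm ((Real.log A2) ^ 2) K]
    -- Step 5: log of that → log(c²/K)
    have hloglim : Tendsto (fun A2 : ℝ =>
        Real.log ((1 + θ A2 ^ 2 / K) / (Real.log A2) ^ 2)) atTop
        (𝓝 (Real.log (c ^ 2 / K))) := hsum.log (by positivity)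
    -- Step 6: R A2 - log log A2 → L
    have hfin : Tendsto (fun A2 : ℝ => R A2 - Real.log (Real.log A2)) atTop
        (𝓝 ((1 / 2) * Real.log (c ^ 2 / K))) := by
      have h0 := hloglim.const_mul (1/2 : ℝ)
      refine h0.congr' ?_
      filter_upwards [Real.tendsto_log_atTop.eventually_gt_atTop 0] with A2 hA2
      have h1 : (0:ℝ) < 1 + θ A2 ^ 2 / K := by positivity
      rw [Real.log_div (ne_of_gt h1) (by positivity), Real.log_pow]
      simp only [hR]
      push_cast
      ring
    refine ⟨|(1 / 2) * Real.log (c ^ 2 / K)| + 1, ?_⟩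
    have := hfin.eventually (Metric.ball_mem_nhds _ one_pos)
    filter_upwards [this] with A2 hA2
    rw [Real.dist_eq] at hA2
    calc |R A2 - Real.log (Real.log A2)|
        ≤ |R A2 - Real.log (Real.log A2) - (1/2) * Real.log (c ^ 2 / K)| +
          |(1/2) * Real.log (c ^ 2 / K)| := by
          have := abs_sub_abs_le_abs_sub (R A2 - Real.log (Real.log A2))
            ((1/2) * Real.log (c ^ 2 / K))
          have h2 := abs_add_le (R A2 - Real.log (Real.log A2) - (1/2) * Real.log (c ^ 2 / K))
            ((1/2) * Real.log (c ^ 2 / K))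
          simpa using h2
      _ ≤ 1 + |(1/2) * Real.log (c ^ 2 / K)| := by linarith [hA2.le]
      _ = |(1/2) * Real.log (c ^ 2 / K)| + 1 := by ring
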